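/- For a tuple v = (v_1, ..., v_n) of nonnegative integers with n ≥ 1, the number lp(v) of nonnegative integer lattice points in the Pitman–Stanley polytope Π_n(v) satisfies lp(v) = sum over j from 0 to v_1 of lp((v_1 + v_2 - j, v_3, ..., v_n)), and lp of the empty tuple is 1. -/

import Mathlib

/-- `psCount v` is the number of nonnegative integer lattice points in the
Pitman–Stanley polytope `Π_n(v)`, i.e. the number of `x ∈ ℕ^n` such that
`x_1 + ... + x_k ≤ v_1 + ... + v_k` for all `1 ≤ k ≤ n`. -/
noncomputable def psCount {n : ℕ} (v : Fin n → ℕ) : ℕ :=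
  Nat.card {x : Fin n → ℕ // ∀ k : Fin n, ∑ i ∈ Finset.Iic k, x i ≤ ∑ i ∈ Finset.Iic k, v i}

lemma ps_finite {n : ℕ} (v : Fin n → ℕ) :
    Finite {x : Fin n → ℕ // ∀ k : Fin n, ∑ i ∈ Finset.Iic k, x i ≤ ∑ i ∈ Finset.Iic k, v i} := by
  set N := ∑ i : Fin n, v i with hN
  have key : ∀ (x : Fin n → ℕ), (∀ k : Fin n,
      ∑ i ∈ Finset.Iic k, x i ≤ ∑ i ∈ Finset.Iic k, v i) → ∀ i : Fin n, x i < N + 1 := by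
    intro x hx i
    have h1 : x i ≤ ∑ j ∈ Finset.Iic i, x j :=
      Finset.single_le_sum (fun j _ => Nat.zero_le _) (Finset.mem_Iic.2 le_rfl)
    have h2 : ∑ j ∈ Finset.Iic i, v j ≤ N :=
      Finset.sum_le_sum_of_subset (Finset.subset_univ _)
    have := hx i
    omega
  apply Finite.of_injective
    (fun x : {x : Fin n → ℕ // ∀ k : Fin n,
        ∑ i ∈ Finset.Iic k, x i ≤ ∑ i ∈ Finset.Iic k, v i} =>
      (fun i => (⟨x.1 i, key x.1 x.2 i⟩ : Fin (N + 1))))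
  intro x y hxy
  ext i
  exact congrArg Fin.val (congrFun hxy i)

lemma Iic0 {m : ℕ} : Finset.Iic (0 : Fin (m + 1)) = {0} := by
  ext i
  simp [Fin.le_zero_iff]

lemma sum_Iic_succ {n : ℕ} (f : Fin (n + 1) → ℕ) (k : Fin n) :
    ∑ i ∈ Finset.Iic k.succ, f i = f 0 + ∑ i ∈ Finset.Iic k, f i.succ := by
  have h : Finset.Iic k.succ =
      insert (0 : Fin (n + 1)) ((Finset.Iic k).map (Fin.succEmb n)) := by
    ext i
    simp only [Finset.mem_Iic, Finset.mem_insert, Finset.mem_map, Fin.succEmb]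
    constructor
    · intro hi
      rcases Fin.eq_zero_or_eq_succ i with h0 | ⟨j, rfl⟩
      · exact Or.inl h0
      · exact Or.inr ⟨j, Finset.mem_Iic.1 (Finset.mem_Iic.2 (Fin.succ_le_succ_iff.1 hi)), rfl⟩
    · rintro (rfl | ⟨j, hj, rfl⟩)
      · exact Fin.zero_le _
      · exact Fin.succ_le_succ_iff.2 hj
  rw [h, Finset.sum_insert, Finset.sum_map]
  · rfl
  · simp only [Finset.mem_map, Fin.succEmb]
    rintro ⟨j, _, hj⟩
    exact (Fin.succ_ne_zero j) hj

/-- the reduced weight vector -/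
def wv {n : ℕ} (v : Fin (n + 1) → ℕ) (j : ℕ) : Fin n → ℕ :=
  fun k => if (k : ℕ) = 0 then v 0 + v k.succ - j else v k.succ

lemma sum_w {n : ℕ} (v : Fin (n + 1) → ℕ) (j : ℕ) (hj : j ≤ v 0) (k : Fin n) :
    ∑ i ∈ Finset.Iic k, wv v j i = (v 0 - j) + ∑ i ∈ Finset.Iic k, v i.succ := by
  haveI : NeZero n := ⟨fun h => (h ▸ k).elim0⟩
  have key : ∀ i : Fin n, wv v j i = (if i = 0 then v 0 - j else 0) + v i.succ := by
    intro i
    unfold wv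
    by_cases h : i = 0
    · rw [if_pos h, if_pos (by rw [h]; rfl)]
      omega
    · rw [if_neg h, if_neg (fun hc => h (Fin.ext (by simpa using hc))), Nat.zero_add]
  rw [Finset.sum_congr rfl (fun i _ => key i), Finset.sum_add_distrib,
    Finset.sum_ite_eq' (Finset.Iic k) (0 : Fin n) (fun _ => v 0 - j)]
  simp

lemma tail_mem {n : ℕ} (v : Fin (n + 1) → ℕ) (x : Fin (n + 1) → ℕ)
    (hx : ∀ k : Fin (n + 1), ∑ i ∈ Finset.Iic k, x i ≤ ∑ i ∈ Finset.Iic k, v i) :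
    ∀ k : Fin n, ∑ i ∈ Finset.Iic k, Fin.tail x i ≤ ∑ i ∈ Finset.Iic k, wv v (x 0) i := by
  intro k
  have hx0 : x 0 ≤ v 0 := by
    have := hx 0
    rw [Iic0] at this
    simpa using this
  have h := hx k.succ
  rw [sum_Iic_succ x k, sum_Iic_succ v k] at h
  rw [sum_w v (x 0) hx0 k]
  show ∑ i ∈ Finset.Iic k, x i.succ ≤ _
  omega

lemma cons_mem {n : ℕ} (v : Fin (n + 1) → ℕ) (j : ℕ) (hj : j ≤ v 0) (y : Fin n → ℕ)
    (hy : ∀ k : Fin n, ∑ i ∈ Finset.Iic k, y i ≤ ∑ i ∈ Finset.Iic k, wv v j i) :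
    ∀ k : Fin (n + 1), ∑ i ∈ Finset.Iic k, Fin.cons j y i ≤ ∑ i ∈ Finset.Iic k, v i := by
  intro k
  cases k using Fin.cases with
  | zero =>
    rw [Iic0]
    simpa using hj
  | succ m =>
    rw [sum_Iic_succ (Fin.cons j y) m, sum_Iic_succ v m]
    have h := hy m
    rw [sum_w v j hj m] at h
    simp only [Fin.cons_zero, Fin.cons_succ]
    omega

noncomputable def psEquiv {n : ℕ} (v : Fin (n + 1) → ℕ) :
    {x : Fin (n + 1) → ℕ // ∀ k : Fin (n + 1),
        ∑ i ∈ Finset.Iic k, x i ≤ ∑ i ∈ Finset.Iic k, v i} ≃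
      Σ j : Fin (v 0 + 1), {y : Fin n → ℕ // ∀ k : Fin n,
        ∑ i ∈ Finset.Iic k, y i ≤ ∑ i ∈ Finset.Iic k, wv v (j : ℕ) i} where
  toFun x := ⟨⟨x.1 0, by
      have h := x.2 0
      rw [Iic0] at h
      simp only [Finset.sum_singleton] at h
      omega⟩,
    ⟨Fin.tail x.1, tail_mem v x.1 x.2⟩⟩
  invFun p := ⟨Fin.cons (p.1 : ℕ) p.2.1,
    cons_mem v (p.1 : ℕ) (Nat.lt_succ_iff.mp p.1.2) p.2.1 p.2.2⟩
  left_inv x := Subtype.ext (Fin.cons_self_tail x.1)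
  right_inv p := rfl

theorem stmt_7 :
    (∀ v : Fin 0 → ℕ, psCount v = 1) ∧
    ∀ (n : ℕ) (v : Fin (n + 1) → ℕ),
      psCount v = ∑ j ∈ Finset.range (v 0 + 1),
        psCount (fun k : Fin n => if (k : ℕ) = 0 then v 0 + v k.succ - j else v k.succ) := by
  constructor
  · intro v
    unfold psCount
    haveI : Nonempty {x : Fin 0 → ℕ // ∀ k : Fin 0,
        ∑ i ∈ Finset.Iic k, x i ≤ ∑ i ∈ Finset.Iic k, v i} :=
      ⟨⟨fun i => i.elim0, fun k => k.elim0⟩⟩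
    haveI : Subsingleton {x : Fin 0 → ℕ // ∀ k : Fin 0,
        ∑ i ∈ Finset.Iic k, x i ≤ ∑ i ∈ Finset.Iic k, v i} :=
      ⟨fun a b => Subtype.ext (funext fun i => i.elim0)⟩
    exact Nat.card_unique
  · intro n v
    haveI : ∀ j : ℕ, Finite {y : Fin n → ℕ // ∀ k : Fin n,
        ∑ i ∈ Finset.Iic k, y i ≤ ∑ i ∈ Finset.Iic k, wv v j i} := fun j => ps_finite (wv v j)
    haveI : ∀ j : ℕ, Fintype {y : Fin n → ℕ // ∀ k : Fin n,
        ∑ i ∈ Finset.Iic k, y i ≤ ∑ i ∈ Finset.Iic k, wv v j i} := fun j => Fintype.ofFinite _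
    calc psCount v
        = Nat.card (Σ j : Fin (v 0 + 1), {y : Fin n → ℕ // ∀ k : Fin n,
            ∑ i ∈ Finset.Iic k, y i ≤ ∑ i ∈ Finset.Iic k, wv v (j : ℕ) i}) :=
          Nat.card_congr (psEquiv v)
      _ = ∑ j : Fin (v 0 + 1), Nat.card {y : Fin n → ℕ // ∀ k : Fin n,
            ∑ i ∈ Finset.Iic k, y i ≤ ∑ i ∈ Finset.Iic k, wv v (j : ℕ) i} := by
          simp only [Nat.card_eq_fintype_card, Fintype.card_sigma]
      _ = ∑ j ∈ Finset.range (v 0 + 1), Nat.card {y : Fin n → ℕ // ∀ k : Fin n,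
            ∑ i ∈ Finset.Iic k, y i ≤ ∑ i ∈ Finset.Iic k, wv v j i} :=
          Fin.sum_univ_eq_sum_range (fun j => Nat.card {y : Fin n → ℕ // ∀ k : Fin n,
            ∑ i ∈ Finset.Iic k, y i ≤ ∑ i ∈ Finset.Iic k, wv v j i}) (v 0 + 1)
      _ = _ := rfl
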